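/- Let m₁, m₂, n₁, n₂ > 0, ν₁₁, ν₁₂, ν₂₂, ν₂₁ > 0 with ν₁₂ = ε ν₂₁ for some 0 < ε ≤ 1, and δ ≤ 1, α ≤ 1. Let a, b ∈ ℓ²(ℕ, ℂ) satisfy a₀ = b₀ = 0, √m₁ a₁ + √m₂ b₁ = 0, and a₂ + b₂ = 0. Define the quadratic form D(a,b) = (1/n₁)[ −2(ν₁₁ n₁ + ν₁₂ n₂) Σ_{j≥3} |a_j|² − 2 ν₁₂ n₂ (1−δ) |a₁|² − 2 ν₁₂ n₂ (1−α) |a₂|² + 2 ν₁₂ n₁ (1−δ) √(m₁/m₂) Re(conj(a₁) b₁) + 2 ν₁₂ n₁ (1−α) Re(b₂ conj(a₂)) ] + (1/n₂)[ −2(ν₂₂ n₂ + ν₂₁ n₁) Σ_{j≥3} |b_j|² − 2 ν₁₂ n₁ (m₁/m₂)(1−δ) |b₁|² − 2 ν₁₂ n₁ (1−α) |b₂|² + 2 ν₁₂ n₂ (1−δ) √(m₁/m₂) Re(conj(a₁) b₁) + 2 ν₁₂ n₂ (1−α) Re(b₂ conj(a₂)) ]. Set C = 2 min{ ν₁₂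 n₂ (1−δ), ν₁₂ n₂ (1−α), ν₁₁ n₁ + ν₁₂ n₂, ν₁₂ n₁ (m₁/m₂)(1−δ), ν₁₂ n₁ (1−α), ν₂₂ n₂ + ν₁₂ n₁ }. Then D(a,b) ≤ − C · ( (1/n₁) ‖a‖²_{ℓ²} + (1/n₂) ‖b‖²_{ℓ²} ). -/

import Mathlib

lemma norm_sq_decomp (f : lp (fun _ : ℕ => ℂ) 2) (hf0 : f 0 = 0) :
    ‖f‖ ^ 2 = ‖f 1‖ ^ 2 + ‖f 2‖ ^ 2 + ∑' j : ℕ, ‖f (j + 3)‖ ^ 2 := by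
  have hp : (0:ℝ) < (2 : ENNReal).toReal := by norm_num
  have h := lp.norm_rpow_eq_tsum hp f
  have hsum : Summable fun i => ‖f i‖ ^ (2:ℕ) := by
    have := (lp.memℓp f).summable hp
    simpa [Real.rpow_natCast] using this
  have h2 : ‖f‖ ^ (2:ℕ) = ∑' i, ‖f i‖ ^ (2:ℕ) := by
    have := h
    simp only [ENNReal.toReal_ofNat] at this
    rw [show ((2:ℝ)) = ((2:ℕ):ℝ) by norm_num] at this
    simpa [Real.rpow_natCast] using this
  rw [h2]
  rw [Summable.tsum_eq_zero_add hsum, Summable.tsum_eq_zero_add (by simpa [Function.comp_def] using hsum.comp_injective (add_left_injective 1)), Summable.tsum_eq_zero_add (by simpa [Function.comp_def] using (hsum.comp_injective (add_left_injective 1)).comp_injective (add_left_injective 1))]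
  simp [hf0]
  have : ∀ b:ℕ, b + 1 + 1 + 1 = b + 3 := fun b => by ring
  simp only [this]
  ring

set_option maxHeartbeats 1000000 in
/-- The zero-mode entropy dissipation estimate for the linearized two-species BGK system:
under the conservation constraints `a₀ = b₀ = 0`, `√m₁ a₁ + √m₂ b₁ = 0`, `a₂ + b₂ = 0`,
the weighted dissipation quadratic form `D(a,b)` is bounded above by
`−C((1/n₁)‖a‖² + (1/n₂)‖b‖²)` with
`C = 2 min{ν₁₂n₂(1−δ), ν₁₂n₂(1−α), ν₁₁n₁+ν₁₂n₂, ν₁₂n₁(m₁/m₂)(1−δ), ν₁₂n₁(1−α), ν₂₂n₂+ν₁₂n₁}`. -/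
theorem zero_mode_dissipation_estimate (m₁ m₂ n₁ n₂ ν₁₁ ν₁₂ ν₂₂ ν₂₁ ε δ α : ℝ)
    (hm₁ : 0 < m₁) (hm₂ : 0 < m₂) (hn₁ : 0 < n₁) (hn₂ : 0 < n₂)
    (hν₁₁ : 0 < ν₁₁) (hν₁₂ : 0 < ν₁₂) (hν₂₂ : 0 < ν₂₂) (hν₂₁ : 0 < ν₂₁)
    (hcoll : ν₁₂ = ε * ν₂₁) (hε0 : 0 < ε) (hε1 : ε ≤ 1) (hδ : δ ≤ 1) (hα : α ≤ 1)
    (a b : lp (fun _ : ℕ => ℂ) 2)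
    (ha0 : a 0 = 0) (hb0 : b 0 = 0)
    (hmom : (Real.sqrt m₁ : ℂ) * a 1 + (Real.sqrt m₂ : ℂ) * b 1 = 0)
    (hen : a 2 + b 2 = 0) :
    (1 / n₁) *
        (-2 * (ν₁₁ * n₁ + ν₁₂ * n₂) * (∑' j : ℕ, ‖a (j + 3)‖ ^ 2)
          - 2 * ν₁₂ * n₂ * (1 - δ) * ‖a 1‖ ^ 2
          - 2 * ν₁₂ * n₂ * (1 - α) * ‖a 2‖ ^ 2
          + 2 * ν₁₂ * n₁ * (1 - δ) * Real.sqrt (m₁ / m₂) * ((starRingEnd ℂ) (a 1) * b 1).re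
          + 2 * ν₁₂ * n₁ * (1 - α) * (b 2 * (starRingEnd ℂ) (a 2)).re)
      + (1 / n₂) *
        (-2 * (ν₂₂ * n₂ + ν₂₁ * n₁) * (∑' j : ℕ, ‖b (j + 3)‖ ^ 2)
          - 2 * ν₁₂ * n₁ * (m₁ / m₂) * (1 - δ) * ‖b 1‖ ^ 2
          - 2 * ν₁₂ * n₁ * (1 - α) * ‖b 2‖ ^ 2
          + 2 * ν₁₂ * n₂ * (1 - δ) * Real.sqrt (m₁ / m₂) * ((starRingEnd ℂ) (a 1) * b 1).re
          + 2 * ν₁₂ * n₂ * (1 - α) * (b 2 * (starRingEnd ℂ) (a 2)).re)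
      ≤ -(2 * min (ν₁₂ * n₂ * (1 - δ))
            (min (ν₁₂ * n₂ * (1 - α))
              (min (ν₁₁ * n₁ + ν₁₂ * n₂)
                (min (ν₁₂ * n₁ * (m₁ / m₂) * (1 - δ))
                  (min (ν₁₂ * n₁ * (1 - α)) (ν₂₂ * n₂ + ν₁₂ * n₁)))))) *
          ((1 / n₁) * ‖a‖ ^ 2 + (1 / n₂) * ‖b‖ ^ 2) := by
  have hs2 : (0:ℝ) < Real.sqrt m₂ := Real.sqrt_pos.2 hm₂
  set z := a 1 with hz
  set w := b 1 with hwdef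
  -- express b 1 in terms of a 1
  have hw : w = -((Real.sqrt m₁ / Real.sqrt m₂ : ℝ) : ℂ) * z := by
    have h : ((Real.sqrt m₂ : ℝ) : ℂ) ≠ 0 := by exact_mod_cast hs2.ne'
    push_cast
    field_simp
    linear_combination hmom
  have hb2 : b 2 = -(a 2) := by linear_combination hen
  set μ := m₁ / m₂ with hμdef
  have hμ : 0 < μ := div_pos hm₁ hm₂
  have hsqrtμ : Real.sqrt μ = Real.sqrt m₁ / Real.sqrt m₂ := Real.sqrt_div hm₁.le m₂
  -- cross term 1
  have hre1 : ((starRingEnd ℂ) z * w).re = -(Real.sqrt m₁ / Real.sqrt m₂) * ‖z‖ ^ 2 := by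
    have h1 : (starRingEnd ℂ) z * w =
        ((-(Real.sqrt m₁ / Real.sqrt m₂) * Complex.normSq z : ℝ) : ℂ) := by
      rw [hw]
      push_cast
      rw [← Complex.mul_conj z]
      ring
    rw [h1, Complex.ofReal_re, Complex.normSq_eq_norm_sq]
  have hw1 : ‖w‖ ^ 2 = μ * ‖z‖ ^ 2 := by
    rw [hw, norm_mul, mul_pow, norm_neg, Complex.norm_real, Real.norm_eq_abs,
      abs_of_nonneg (by positivity), div_pow, Real.sq_sqrt hm₁.le, Real.sq_sqrt hm₂.le]
  -- cross term 2
  have hre2 : (b 2 * (starRingEnd ℂ) (a 2)).re = -(‖a 2‖ ^ 2) := by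
    have h1 : b 2 * (starRingEnd ℂ) (a 2) = ((-Complex.normSq (a 2) : ℝ) : ℂ) := by
      rw [hb2]
      push_cast
      rw [← Complex.mul_conj (a 2)]
      ring
    rw [h1, Complex.ofReal_re, Complex.normSq_eq_norm_sq]
  have hw2 : ‖b 2‖ ^ 2 = ‖a 2‖ ^ 2 := by rw [hb2, norm_neg]
  -- combined cross rewrites
  have key1 : ∀ c : ℝ, c * Real.sqrt μ * ((starRingEnd ℂ) z * w).re = -(c * (μ * ‖z‖ ^ 2)) := by
    intro c
    rw [hre1, hsqrtμ]
    have : Real.sqrt m₁ / Real.sqrt m₂ * (Real.sqrt m₁ / Real.sqrt m₂) = μ := by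
      rw [div_mul_div_comm, ← Real.sqrt_mul hm₁.le, ← Real.sqrt_mul hm₂.le,
        Real.sqrt_mul_self hm₁.le, Real.sqrt_mul_self hm₂.le]
    linear_combination (-(c * ‖z‖ ^ 2)) * this
  -- norms
  have hna : ‖a‖ ^ 2 = ‖z‖ ^ 2 + ‖a 2‖ ^ 2 + ∑' j : ℕ, ‖a (j + 3)‖ ^ 2 :=
    norm_sq_decomp a ha0
  have hnb : ‖b‖ ^ 2 = μ * ‖z‖ ^ 2 + ‖a 2‖ ^ 2 + ∑' j : ℕ, ‖b (j + 3)‖ ^ 2 := by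
    rw [norm_sq_decomp b hb0, ← hwdef, hw1, hw2]
  set A1 := ‖z‖ ^ 2 with hA1
  set A2 := ‖a 2‖ ^ 2 with hA2
  set Sa := ∑' j : ℕ, ‖a (j + 3)‖ ^ 2 with hSa
  set Sb := ∑' j : ℕ, ‖b (j + 3)‖ ^ 2 with hSb
  have hA1n : 0 ≤ A1 := by positivity
  have hA2n : 0 ≤ A2 := by positivity
  have hSan : 0 ≤ Sa := tsum_nonneg fun j => by positivity
  have hSbn : 0 ≤ Sb := tsum_nonneg fun j => by positivity
  set C := min (ν₁₂ * n₂ * (1 - δ))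
      (min (ν₁₂ * n₂ * (1 - α))
        (min (ν₁₁ * n₁ + ν₁₂ * n₂)
          (min (ν₁₂ * n₁ * μ * (1 - δ))
            (min (ν₁₂ * n₁ * (1 - α)) (ν₂₂ * n₂ + ν₁₂ * n₁))))) with hC
  have hC1 : C ≤ ν₁₂ * n₂ * (1 - δ) := min_le_left _ _
  have hC2 : C ≤ ν₁₂ * n₂ * (1 - α) := le_trans (min_le_right _ _) (min_le_left _ _)
  have hC3 : C ≤ ν₁₁ * n₁ + ν₁₂ * n₂ :=
    le_trans (min_le_right _ _) (le_trans (min_le_right _ _) (min_le_left _ _))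
  have hC4 : C ≤ ν₁₂ * n₁ * μ * (1 - δ) :=
    le_trans (min_le_right _ _) (le_trans (min_le_right _ _)
      (le_trans (min_le_right _ _) (min_le_left _ _)))
  have hC5 : C ≤ ν₁₂ * n₁ * (1 - α) :=
    le_trans (min_le_right _ _) (le_trans (min_le_right _ _)
      (le_trans (min_le_right _ _) (le_trans (min_le_right _ _) (min_le_left _ _))))
  have hC6 : C ≤ ν₂₂ * n₂ + ν₂₁ * n₁ := by
    have h0 : C ≤ ν₂₂ * n₂ + ν₁₂ * n₁ :=
      le_trans (min_le_right _ _) (le_trans (min_le_right _ _)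
        (le_trans (min_le_right _ _) (le_trans (min_le_right _ _) (min_le_right _ _))))
    have hle : ν₁₂ ≤ ν₂₁ := by
      rw [hcoll]
      nlinarith [mul_le_mul_of_nonneg_right hε1 hν₂₁.le]
    nlinarith [mul_le_mul_of_nonneg_left hle hn₁.le]
  rw [key1, key1, hre2, hw1, hw2, hna, hnb]
  have hin1 : 0 < 1 / n₁ := by positivity
  have hin2 : 0 < 1 / n₂ := by positivity
  have hδ' : 0 ≤ 1 - δ := by linarith
  have hα' : 0 ≤ 1 - α := by linarith
  linarith [mul_nonneg (mul_nonneg (sub_nonneg.2 hC1) hin1.le) hA1n,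
    mul_nonneg (mul_nonneg (sub_nonneg.2 hC2) hin1.le) hA2n,
    mul_nonneg (mul_nonneg (sub_nonneg.2 hC3) hin1.le) hSan,
    mul_nonneg (mul_nonneg (sub_nonneg.2 hC4) hin2.le) (mul_nonneg hμ.le hA1n),
    mul_nonneg (mul_nonneg (sub_nonneg.2 hC5) hin2.le) hA2n,
    mul_nonneg (mul_nonneg (sub_nonneg.2 hC6) hin2.le) hSbn,
    mul_nonneg hin1.le (mul_nonneg (mul_nonneg (mul_nonneg (mul_nonneg (by positivity : (0:ℝ) ≤ 2 * ν₁₂) hn₁.le) hδ') hμ.le) hA1n),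
    mul_nonneg hin1.le (mul_nonneg (mul_nonneg (by positivity : (0:ℝ) ≤ 2 * ν₁₂ * n₁) hα') hA2n),
    mul_nonneg hin2.le (mul_nonneg (mul_nonneg (mul_nonneg (mul_nonneg (by positivity : (0:ℝ) ≤ 2 * ν₁₂) hn₂.le) hδ') hμ.le) hA1n),
    mul_nonneg hin2.le (mul_nonneg (mul_nonneg (by positivity : (0:ℝ) ≤ 2 * ν₁₂ * n₂) hα') hA2n)]
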